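/- Let (S,+) be an infinite left weakly cancellative semigroup with no idempotent, and let A be an IP set in S. Then A can be partitioned into countably infinitely many pairwise disjoint sets, each of which is an IP set in S. -/

import Mathlib

/-- Sum of `x` over the finite set `H ⊆ ℕ`, taken in increasing order of indices
(with junk value `x 0` when `H = ∅`). -/
def ordSum {S : Type*} [Add S] (x : ℕ → S) (H : Finset ℕ) : S :=
  match H.sort (· ≤ ·) with
  | [] => x 0
  | h :: t => t.foldl (fun s n => s + x n) (x h)

/-- `FS(⟨x_n⟩) = {∑_{n ∈ H} x_n : H a nonempty finite subset of ℕ}`,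
sums in increasing order of indices. -/
def FS {S : Type*} [Add S] (x : ℕ → S) : Set S :=
  {s | ∃ H : Finset ℕ, H.Nonempty ∧ s = ordSum x H}

/-- `A` is an IP set if `FS(⟨x_n⟩) ⊆ A` for some sequence `⟨x_n⟩` in `S`. -/
def IPSet {S : Type*} [Add S] (A : Set S) : Prop :=
  ∃ x : ℕ → S, FS x ⊆ A

lemma ordSum_of_sort_eq {S : Type*} [Add S] (x : ℕ → S) {H : Finset ℕ} {h : ℕ} {t : List ℕ}
    (hs : H.sort (· ≤ ·) = h :: t) :
    ordSum x H = t.foldl (fun s n => s + x n) (x h) := by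
  unfold ordSum
  rw [hs]

lemma ordSum_singleton {S : Type*} [Add S] (x : ℕ → S) (n : ℕ) :
    ordSum x {n} = x n := by
  rw [ordSum_of_sort_eq x (Finset.sort_singleton _ n)]
  rfl


lemma exists_sort_cons {K : Finset ℕ} (hK : K.Nonempty) :
    ∃ a t, K.sort (· ≤ ·) = a :: t := by
  cases hs : K.sort (· ≤ ·) with
  | nil =>
      exfalso
      have hl := Finset.length_sort (α := ℕ) (· ≤ ·) (s := K)
      rw [hs] at hl
      simp only [List.length_nil] at hl
      rw [Finset.card_eq_zero.mp hl.symm] at hK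
      exact absurd hK Finset.not_nonempty_empty
  | cons a t => exact ⟨a, t, rfl⟩

lemma foldl_add_assoc {S : Type*} [AddSemigroup S] (x : ℕ → S) (a b : S) (l : List ℕ) :
    l.foldl (fun s n => s + x n) (a + b) = a + l.foldl (fun s n => s + x n) b := by
  induction l generalizing b with
  | nil => rfl
  | cons h t ih => simp only [List.foldl, add_assoc, ih]

lemma eq_of_perm_of_sorted {l₁ l₂ : List ℕ} {r : ℕ → ℕ → Prop} [Std.Antisymm r]
    (hp : l₁.Perm l₂) (h₁ : l₁.Pairwise r) (h₂ : l₂.Pairwise r) : l₁ = l₂ :=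
  List.Perm.eq_of_pairwise' h₁ h₂ hp

lemma sort_union_of_lt {H H' : Finset ℕ} (h : ∀ i ∈ H, ∀ j ∈ H', i < j) :
    (H ∪ H').sort (· ≤ ·) = H.sort (· ≤ ·) ++ H'.sort (· ≤ ·) := by
  have hd : Disjoint H H' := by
    rw [Finset.disjoint_left]
    intro a ha ha'
    exact absurd rfl (h a ha a ha').ne
  symm
  apply eq_of_perm_of_sorted (r := (· ≤ · : ℕ → ℕ → Prop))
  · rw [← Multiset.coe_eq_coe]
    push_cast [Finset.sort_eq]
    rw [← Finset.disjUnion_eq_union _ _ hd]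
    show (↑(Finset.sort H (· ≤ ·)) + ↑(Finset.sort H' (· ≤ ·)) : Multiset ℕ) = _
    rw [Finset.sort_eq, Finset.sort_eq]
    rfl
  · rw [List.pairwise_append]
    refine ⟨Finset.pairwise_sort _ _, Finset.pairwise_sort _ _, ?_⟩
    intro a ha b hb
    exact (h a (Finset.mem_sort _ |>.1 ha) b (Finset.mem_sort _ |>.1 hb)).le
  · exact Finset.pairwise_sort _ _

lemma ordSum_union {S : Type*} [AddSemigroup S] (x : ℕ → S) {H H' : Finset ℕ}
    (hH : H.Nonempty) (hH' : H'.Nonempty) (h : ∀ i ∈ H, ∀ j ∈ H', i < j) :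
    ordSum x (H ∪ H') = ordSum x H + ordSum x H' := by
  obtain ⟨a, t, hat⟩ := exists_sort_cons hH
  obtain ⟨b, u, hbu⟩ := exists_sort_cons hH'
  have hs : (H ∪ H').sort (· ≤ ·) = a :: (t ++ b :: u) := by
    rw [sort_union_of_lt h, hat, hbu]; rfl
  rw [ordSum_of_sort_eq x hs, ordSum_of_sort_eq x hat, ordSum_of_sort_eq x hbu]
  rw [List.foldl_append]
  simp only [List.foldl]
  rw [foldl_add_assoc]

lemma foldl_congr {S : Type*} [Add S] {f g : ℕ → S} (l : List ℕ)
    (h : ∀ i ∈ l, f i = g i) (a : S) :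
    l.foldl (fun s n => s + f n) a = l.foldl (fun s n => s + g n) a := by
  induction l generalizing a with
  | nil => rfl
  | cons c t ih =>
      simp only [List.foldl]
      rw [h c (by simp)]
      exact ih (fun i hi => h i (by simp [hi])) _

lemma ordSum_congr {S : Type*} [Add S] {f g : ℕ → S} {K : Finset ℕ}
    (hK : K.Nonempty) (h : ∀ i ∈ K, f i = g i) : ordSum f K = ordSum g K := by
  have hmem : ∀ i ∈ K.sort (· ≤ ·), f i = g i := fun i hi => h i (Finset.mem_sort _ |>.1 hi)
  obtain ⟨a, t, hat⟩ := exists_sort_cons hK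
  rw [ordSum_of_sort_eq f hat, ordSum_of_sort_eq g hat]
  rw [hat] at hmem
  rw [hmem a (by simp)]
  exact foldl_congr t (fun i hi => hmem i (by simp [hi])) _

lemma ordSum_map {S : Type*} [Add S] (y : ℕ → S) {e : ℕ → ℕ} (he : StrictMono e)
    (K : Finset ℕ) (hK : K.Nonempty) :
    ordSum (fun k => y (e k)) K = ordSum y (K.image e) := by
  have hsort : (K.image e).sort (· ≤ ·) = (K.sort (· ≤ ·)).map e := by
    symm
    apply eq_of_perm_of_sorted (r := (· ≤ · : ℕ → ℕ → Prop))
    · rw [← Multiset.coe_eq_coe]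
      rw [Finset.sort_eq]
      rw [Finset.image_val_of_injOn (he.injective.injOn)]
      rw [← Finset.sort_eq K (· ≤ ·)]
      rfl
    · exact List.Pairwise.map e (fun a b hab => he.monotone hab) (Finset.pairwise_sort _ _)
    · exact Finset.pairwise_sort _ _
  obtain ⟨a, t, hat⟩ := exists_sort_cons hK
  have : (K.image e).sort (· ≤ ·) = e a :: t.map e := by rw [hsort, hat]; rfl
  rw [ordSum_of_sort_eq _ hat, ordSum_of_sort_eq y this, List.foldl_map]

section AB
variable {S : Type*} [AddSemigroup S]

lemma no_add_fixed (hlwc : ∀ a b : S, {x : S | a + x = b}.Finite)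
    (hni : ∀ s : S, s + s ≠ s) (a d : S) (had : a + d = a) : False := by
  let f : ℕ → S := fun k => Nat.rec d (fun _ s => s + d) k
  have hfs : ∀ k, f (k + 1) = f k + d := fun k => rfl
  have hafix : ∀ k, a + f k = a := by
    intro k
    induction k with
    | zero => exact had
    | succ k ih => rw [hfs, ← add_assoc, ih, had]
  by_cases hinj : Function.Injective f
  · exact (Set.infinite_of_injective_forall_mem hinj hafix) (hlwc a a)
  · rw [Function.not_injective_iff] at hinj
    obtain ⟨i', j', hfij', hne'⟩ := hinj
    obtain ⟨i, j, hij, hfij⟩ : ∃ i j : ℕ, i < j ∧ f i = f j := by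
      rcases lt_or_gt_of_ne hne' with h | h
      · exact ⟨i', j', h, hfij'⟩
      · exact ⟨j', i', h, hfij'.symm⟩
    have hshift : ∀ t, f (i + t) = f (j + t) := by
      intro t
      induction t with
      | zero => simpa using hfij
      | succ t ih =>
          have h1 : i + (t + 1) = (i + t) + 1 := by omega
          have h2 : j + (t + 1) = (j + t) + 1 := by omega
          rw [h1, h2, hfs (i + t), hfs (j + t), ih]
    set p := j - i with hp
    have hp1 : 1 ≤ p := by omega
    have hstep : ∀ k, i ≤ k → f (k + p) = f k := by
      intro k hk
      have h1 : k + p = j + (k - i) := by omega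
      have h2 : i + (k - i) = k := by omega
      rw [h1, ← hshift, h2]
    have hper : ∀ k, i ≤ k → ∀ m : ℕ, f (k + m * p) = f k := by
      intro k hk m
      induction m with
      | zero => simp
      | succ m ih =>
          have h1 : k + (m + 1) * p = (k + m * p) + p := by ring
          rw [h1, hstep (k + m * p) (le_trans hk (Nat.le_add_right _ _)), ih]
    have hadd : ∀ k l : ℕ, f k + f l = f (k + l + 1) := by
      intro k l
      induction l with
      | zero => exact (hfs k).symm
      | succ l ih =>
          have h2 : f (l + 1) = f l + d := hfs l
          have h3 : f (k + (l + 1) + 1) = f (k + l + 1) + d := by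
            have h4 : k + (l + 1) + 1 = (k + l + 1) + 1 := by omega
            rw [h4]
          rw [h2, h3, ← add_assoc, ih]
    have hpos : 1 ≤ (i + 1) * p := Nat.one_le_iff_ne_zero.2 (by positivity)
    set n := (i + 1) * p - 1 with hn
    have hni' : i ≤ n := by
      have h := le_mul_of_one_le_right (Nat.zero_le (i + 1)) hp1
      exact Nat.le_sub_one_of_lt (lt_of_lt_of_le (Nat.lt_succ_self i) h)
    have hnp : n + 1 = (i + 1) * p := by
      rw [hn]
      exact Nat.succ_pred_eq_of_pos hpos
    have hidem : f n + f n = f n := by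
      have h5 : n + n + 1 = n + (n + 1) := by omega
      rw [hadd n n, h5, hnp, hper n hni' (i + 1)]
    exact hni _ hidem

lemma V_infinite (hlwc : ∀ a b : S, {x : S | a + x = b}.Finite)
    (hni : ∀ s : S, s + s ≠ s) (x : ℕ → S) (m : ℕ) :
    {s : S | ∃ H : Finset ℕ, H.Nonempty ∧ (∀ i ∈ H, m < i) ∧ s = ordSum x H}.Infinite := by
  by_contra hfin
  rw [Set.not_infinite] at hfin
  set t : ℕ → S := fun k => ordSum x (Finset.Ioc m (m + k + 1)) with ht
  have htV : ∀ k, t k ∈ {s : S | ∃ H : Finset ℕ, H.Nonempty ∧ (∀ i ∈ H, m < i) ∧ s = ordSum x H} := by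
    intro k
    exact ⟨Finset.Ioc m (m + k + 1), Finset.nonempty_Ioc.2 (by omega),
      fun i hi => (Finset.mem_Ioc.1 hi).1, rfl⟩
  have hninj : ¬ Function.Injective t := fun hinj =>
    (Set.infinite_of_injective_forall_mem hinj htV) hfin
  rw [Function.not_injective_iff] at hninj
  obtain ⟨k', l', htkl', hne'⟩ := hninj
  obtain ⟨k, l, hkl, htkl⟩ : ∃ k l : ℕ, k < l ∧ t k = t l := by
    rcases lt_or_gt_of_ne hne' with h | h
    · exact ⟨k', l', h, htkl'⟩
    · exact ⟨l', k', h, htkl'.symm⟩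
  have hsplit : Finset.Ioc m (m + l + 1) =
      Finset.Ioc m (m + k + 1) ∪ Finset.Ioc (m + k + 1) (m + l + 1) :=
    (Finset.Ioc_union_Ioc_eq_Ioc (by omega) (by omega)).symm
  have heq : t l = t k + ordSum x (Finset.Ioc (m + k + 1) (m + l + 1)) := by
    rw [ht]
    simp only
    rw [hsplit]
    exact ordSum_union x (Finset.nonempty_Ioc.2 (by omega)) (Finset.nonempty_Ioc.2 (by omega))
      (fun i hi j hj => lt_of_le_of_lt (Finset.mem_Ioc.1 hi).2 (Finset.mem_Ioc.1 hj).1)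
  exact no_add_fixed hlwc hni (t k) _ (by rw [← heq, htkl])

end AB

noncomputable def Lfun (step : List (Finset ℕ) → Finset ℕ) : ℕ → List (Finset ℕ)
  | 0 => []
  | n + 1 => Lfun step n ++ [step (Lfun step n)]

def mBound (L : List (Finset ℕ)) : ℕ := (L.foldr (· ∪ ·) ∅).sup id

lemma le_mBound {L : List (Finset ℕ)} {B : Finset ℕ} {i : ℕ} (hB : B ∈ L) (hi : i ∈ B) :
    i ≤ mBound L := by
  have hmem : i ∈ L.foldr (· ∪ ·) ∅ := by
    induction L with
    | nil => simp at hB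
    | cons hd tl ih =>
        rcases List.mem_cons.1 hB with h | h
        · exact Finset.mem_union_left _ (h ▸ hi)
        · exact Finset.mem_union_right _ (ih h)
  exact Finset.le_sup (f := id) hmem

noncomputable def PFin {S : Type*} [Add S] (x : ℕ → S) (L : List (Finset ℕ)) : Finset S :=
  letI := Classical.decEq S
  ((Finset.range L.length).powerset.filter Finset.Nonempty).image
    (ordSum (fun i => ordSum x (L.getD i ∅)))

lemma mem_PFin {S : Type*} [Add S] {x : ℕ → S} {L : List (Finset ℕ)} {s : S} :
    s ∈ PFin x L ↔ ∃ K : Finset ℕ, K ⊆ Finset.range L.length ∧ K.Nonempty ∧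
      ordSum (fun i => ordSum x (L.getD i ∅)) K = s := by
  classical
  unfold PFin
  constructor
  · intro hs
    obtain ⟨K, hK, hKs⟩ := Finset.mem_image.1 hs
    obtain ⟨hK1, hK2⟩ := Finset.mem_filter.1 hK
    exact ⟨K, Finset.mem_powerset.1 hK1, hK2, hKs⟩
  · rintro ⟨K, hK1, hK2, hKs⟩
    exact Finset.mem_image.2 ⟨K, Finset.mem_filter.2 ⟨Finset.mem_powerset.2 hK1, hK2⟩, hKs⟩

/-- If `(S,+)` is an infinite left weakly cancellative semigroup with no
idempotent and `A` is an IP set in `S`, then `A` can be partitioned into countably infinitely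
many pairwise disjoint IP sets. -/
theorem stmt0 {S : Type*} [AddSemigroup S] [Infinite S]
    (hlwc : ∀ a b : S, {x : S | a + x = b}.Finite)
    (hni : ∀ s : S, s + s ≠ s)
    (A : Set S) (hA : IPSet A) :
    ∃ B : ℕ → Set S, (⋃ n, B n) = A ∧
      (∀ m n : ℕ, m ≠ n → Disjoint (B m) (B n)) ∧
      ∀ n, IPSet (B n) := by

  obtain ⟨x, hFSx⟩ := hA
  have hstepex : ∀ (m : ℕ) (P : Finset S), ∃ H : Finset ℕ, H.Nonempty ∧ (∀ i ∈ H, m < i) ∧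
      ordSum x H ∉ P ∧ ∀ a ∈ P, ∀ b ∈ P, a + ordSum x H ≠ b := by
    intro m P
    have hV := V_infinite hlwc hni x m
    have hbad : ((P : Set S) ∪ ⋃ a ∈ (P : Set S), ⋃ b ∈ (P : Set S), {t : S | a + t = b}).Finite :=
      (P.finite_toSet.union (Set.Finite.biUnion P.finite_toSet fun a _ =>
        Set.Finite.biUnion P.finite_toSet fun b _ => hlwc a b))
    obtain ⟨s, hsV, hsbad⟩ := (hV.diff hbad).nonempty
    obtain ⟨H, hne, hgt, rfl⟩ := hsV
    refine ⟨H, hne, hgt, ?_, ?_⟩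
    · intro hmem
      exact hsbad (Or.inl hmem)
    · intro a ha b hb hab
      exact hsbad (Or.inr (Set.mem_biUnion ha (Set.mem_biUnion hb hab)))
  choose stepH h1 h2 h3 h4 using hstepex
  set step : List (Finset ℕ) → Finset ℕ := fun L => stepH (mBound L) (PFin x L) with hstepdef
  set Hb : ℕ → Finset ℕ := fun n => step (Lfun step n) with hHbdef
  set y : ℕ → S := fun n => ordSum x (Hb n) with hydef
  have hL : ∀ n, Lfun step n = (List.range n).map Hb := by
    intro n
    induction n with
    | zero => rfl
    | succ n ih =>
        have hd : Lfun step (n + 1) = Lfun step n ++ [step (Lfun step n)] := rfl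
        rw [hd, List.range_succ, List.map_append, ← ih]
        rfl
  have hlen : ∀ n, (Lfun step n).length = n := by
    intro n; rw [hL]; simp
  have hgetD : ∀ n i, i < n → (Lfun step n).getD i ∅ = Hb i := by
    intro n i h
    rw [hL, List.getD_eq_getElem?_getD, List.getElem?_map, List.getElem?_range h]
    rfl
  have hbne : ∀ n, (Hb n).Nonempty := fun n => h1 _ _
  have hbgt : ∀ n, ∀ i ∈ Hb n, mBound (Lfun step n) < i := fun n => h2 _ _
  have hynotin : ∀ n, y n ∉ PFin x (Lfun step n) := fun n => h3 _ _
  have hyadd : ∀ n, ∀ a ∈ PFin x (Lfun step n), ∀ b ∈ PFin x (Lfun step n),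
      a + y n ≠ b := fun n => h4 _ _
  have hPchar : ∀ n (K : Finset ℕ), K ⊆ Finset.range n → K.Nonempty →
      ordSum y K ∈ PFin x (Lfun step n) := by
    intro n K hsub hKne
    apply mem_PFin.2
    refine ⟨K, by rw [hlen]; exact hsub, hKne, ?_⟩
    exact ordSum_congr hKne fun i hi => by
      rw [hgetD n i (Finset.mem_range.1 (hsub hi))]
  have hord : ∀ m n, m < n → ∀ i ∈ Hb m, ∀ j ∈ Hb n, i < j := by
    intro m n hmn i hi j hj
    have h5 : Hb m ∈ Lfun step n := by
      rw [hL]; exact List.mem_map.2 ⟨m, List.mem_range.2 hmn, rfl⟩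
    exact lt_of_le_of_lt (le_mBound h5 hi) (hbgt n j hj)
  have hsplit : ∀ (K : Finset ℕ) (hK : K.Nonempty), (K.erase (K.max' hK)).Nonempty →
      ordSum y K = ordSum y (K.erase (K.max' hK)) + y (K.max' hK) := by
    intro K hK hKe
    have h6 : K = K.erase (K.max' hK) ∪ {K.max' hK} := by
      rw [Finset.union_comm, ← Finset.insert_eq, Finset.insert_erase (Finset.max'_mem K hK)]
    conv_lhs => rw [h6]
    rw [ordSum_union y hKe (Finset.singleton_nonempty _) ?_, ordSum_singleton]
    intro i hi j hj
    rw [Finset.mem_singleton] at hj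
    subst hj
    exact lt_of_le_of_ne (Finset.le_max' K i (Finset.mem_of_mem_erase hi))
      (Finset.ne_of_mem_erase hi)
  have hsep : ∀ (K K' : Finset ℕ) (hK : K.Nonempty) (hK' : K'.Nonempty),
      K.max' hK < K'.max' hK' → ordSum y K ≠ ordSum y K' := by
    intro K K' hK hK' hlt heq
    set n := K'.max' hK' with hn
    have hKsub : K ⊆ Finset.range n := fun i hi =>
      Finset.mem_range.2 (lt_of_le_of_lt (Finset.le_max' K i hi) hlt)
    have hmemP : ordSum y K ∈ PFin x (Lfun step n) := hPchar n K hKsub hK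
    by_cases he : (K'.erase n).Nonempty
    · have hK'sub : K'.erase n ⊆ Finset.range n := fun i hi =>
        Finset.mem_range.2 (lt_of_le_of_ne
          (Finset.le_max' K' i (Finset.mem_of_mem_erase hi)) (Finset.ne_of_mem_erase hi))
      have h7 : ordSum y K' = ordSum y (K'.erase n) + y n := hsplit K' hK' he
      exact hyadd n _ (hPchar n _ hK'sub he) _ hmemP (by rw [← h7, ← heq])
    · have hK'n : K' = {n} := by
        have h8 : K'.erase n = ∅ := Finset.not_nonempty_iff_eq_empty.1 he
        rw [← Finset.insert_erase (Finset.max'_mem K' hK'), h8]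
        rfl
      rw [hK'n, ordSum_singleton] at heq
      exact hynotin n (heq ▸ hmemP)
  have hbig : ∀ K : Finset ℕ, K.Nonempty → ordSum y K = ordSum x (K.biUnion Hb) := by
    intro K
    induction K using Finset.strongInductionOn with
    | _ K ih =>
      intro hK
      by_cases he : (K.erase (K.max' hK)).Nonempty
      · have hKe_ss : K.erase (K.max' hK) ⊂ K := Finset.erase_ssubset (Finset.max'_mem K hK)
        have ihe := ih _ hKe_ss he
        have h8 : ordSum x ((K.erase (K.max' hK)).biUnion Hb) + ordSum x (Hb (K.max' hK)) =
            ordSum x ((K.erase (K.max' hK)).biUnion Hb ∪ Hb (K.max' hK)) := by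
          refine (ordSum_union x ?_ (hbne _) ?_).symm
          · obtain ⟨i, hi⟩ := he
            obtain ⟨j, hj⟩ := hbne i
            exact ⟨j, Finset.mem_biUnion.2 ⟨i, hi, hj⟩⟩
          · intro i hi j hj
            obtain ⟨m, hm, him⟩ := Finset.mem_biUnion.1 hi
            have hmn : m < K.max' hK :=
              lt_of_le_of_ne (Finset.le_max' K m (Finset.mem_of_mem_erase hm))
                (Finset.ne_of_mem_erase hm)
            exact hord m _ hmn i him j hj
        have h9 : (K.erase (K.max' hK)).biUnion Hb ∪ Hb (K.max' hK) = K.biUnion Hb := by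
          conv_rhs => rw [← Finset.insert_erase (Finset.max'_mem K hK)]
          rw [Finset.biUnion_insert, Finset.union_comm]
        have hyn : y (K.max' hK) = ordSum x (Hb (K.max' hK)) := rfl
        rw [hsplit K hK he, ihe, hyn, h8, h9]
      · have hKn : K = {K.max' hK} := by
          have h8 : K.erase (K.max' hK) = ∅ := Finset.not_nonempty_iff_eq_empty.1 he
          apply Finset.eq_singleton_iff_unique_mem.2
          refine ⟨Finset.max'_mem K hK, fun b hb => ?_⟩
          by_contra hbne2
          have hmem : b ∈ K.erase (K.max' hK) := Finset.mem_erase.2 ⟨hbne2, hb⟩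
          rw [h8] at hmem
          simp at hmem
        conv_lhs => rw [hKn]
        rw [ordSum_singleton]
        conv_rhs => rw [hKn]
        rw [Finset.singleton_biUnion]
  have hFSyA : ∀ K : Finset ℕ, K.Nonempty → ordSum y K ∈ A := by
    intro K hK
    apply hFSx
    refine ⟨K.biUnion Hb, ?_, hbig K hK⟩
    obtain ⟨i, hi⟩ := hK
    obtain ⟨j, hj⟩ := hbne i
    exact ⟨j, Finset.mem_biUnion.2 ⟨i, hi, hj⟩⟩
  set C : ℕ → Set S := fun n => FS (fun k => y (Nat.pair n k)) with hCdef
  have hpairmono : ∀ n, StrictMono (fun k => Nat.pair n k) :=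
    fun n a b h => Nat.pair_lt_pair_right n h
  have hCchar : ∀ n s, s ∈ C n → ∃ K : Finset ℕ, K.Nonempty ∧
      s = ordSum y (K.image (Nat.pair n)) := by
    intro n s hs
    obtain ⟨K, hKne, rfl⟩ := hs
    exact ⟨K, hKne, ordSum_map y (hpairmono n) K hKne⟩
  have hCA : ∀ n, C n ⊆ A := by
    intro n s hs
    obtain ⟨K, hKne, heq⟩ := hCchar n s hs
    rw [heq]
    exact hFSyA _ (hKne.image _)
  have hCdisj : ∀ m n, m ≠ n → ∀ s, s ∈ C m → s ∈ C n → False := by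
    intro m n hmn s hsm hsn
    obtain ⟨K, hKne, hKeq⟩ := hCchar m s hsm
    obtain ⟨K', hK'ne, hK'eq⟩ := hCchar n s hsn
    have hA1 : (K.image (Nat.pair m)).Nonempty := hKne.image _
    have hA2 : (K'.image (Nat.pair n)).Nonempty := hK'ne.image _
    have hnemax : (K.image (Nat.pair m)).max' hA1 ≠ (K'.image (Nat.pair n)).max' hA2 := by
      intro h
      obtain ⟨a, _, hpa⟩ := Finset.mem_image.1 (Finset.max'_mem _ hA1)
      obtain ⟨b, _, hpb⟩ := Finset.mem_image.1 (Finset.max'_mem _ hA2)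
      rw [← h, ← hpa] at hpb
      exact hmn (Nat.pair_eq_pair.1 hpb).1.symm
    rcases lt_or_gt_of_ne hnemax with h | h
    · exact hsep _ _ hA1 hA2 h (by rw [← hKeq, ← hK'eq])
    · exact hsep _ _ hA2 hA1 h (by rw [← hKeq, ← hK'eq])
  refine ⟨fun n => Nat.casesOn n (A \ (⋃ m, C (m + 1))) (fun k => C (k + 1)), ?_, ?_, ?_⟩
  · ext s
    simp only [Set.mem_iUnion]
    constructor
    · rintro ⟨n, hn⟩
      cases n with
      | zero => exact hn.1
      | succ k => exact hCA (k + 1) hn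
    · intro hs
      by_cases h : s ∈ ⋃ m, C (m + 1)
      · obtain ⟨m, hm⟩ := Set.mem_iUnion.1 h
        exact ⟨m + 1, hm⟩
      · exact ⟨0, hs, h⟩
  · intro m n hmn
    rw [Set.disjoint_left]
    intro s hsm hsn
    cases m with
    | zero =>
        cases n with
        | zero => exact hmn rfl
        | succ k => exact hsm.2 (Set.mem_iUnion.2 ⟨k, hsn⟩)
    | succ j =>
        cases n with
        | zero => exact hsn.2 (Set.mem_iUnion.2 ⟨j, hsm⟩)
        | succ k => exact hCdisj (j + 1) (k + 1) hmn s hsm hsn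
  · intro n
    cases n with
    | zero =>
        refine ⟨fun k => y (Nat.pair 0 k), ?_⟩
        intro s hs
        refine ⟨hCA 0 hs, fun hmem => ?_⟩
        obtain ⟨m, hm⟩ := Set.mem_iUnion.1 hmem
        exact hCdisj 0 (m + 1) (by omega) s hs hm
    | succ k => exact ⟨fun k' => y (Nat.pair (k + 1) k'), fun s hs => hs⟩
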